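/- arXiv:2106.12972 — 2 statements merged into one kernel-verified Lean document; each statement's English description precedes it below -/
import Mathlib

section
/- For every k ≥ 1, every m ≥ 2^k and every n ≥ 1, the element z_{m,n} belongs to Γ^{2^k}; consequently the subgroup ⟨z_{m,n} : m ≥ 2^k, n ≥ 1⟩ is contained in Γ^{2^k}. (The containment established in the proof of Proposition 3.4 of the paper, giving the lower-bound direction of G^{2^k} ∩ Z = L_kQ_k.) -/
namespace Paper

variable {G : Type*} [Group G]

/-- The paper's commutator `[a,b] = a⁻¹ b⁻¹ a b`. -/
def pc {G : Type*} [Group G] (a b : G) : G := a⁻¹ * b⁻¹ * a * b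

/-- The left-normed iterated commutator `[a, x, (r)…, x]`. -/
def itc {G : Type*} [Group G] (x a : G) : ℕ → G
  | 0 => a
  | r + 1 => pc (itc x a r) x

/-- `c_i`, where `c_1 = y` and `c_{i+1} = [c_i, x]`; equivalently `c_i = [y, x, (i-1)…, x]`. -/
def cc (x y : G) (i : ℕ) : G := itc x y (i - 1)

/-- `z_{m,n} = [c_m, c_n]`. -/
def zz (x y : G) (m n : ℕ) : G := pc (cc x y m) (cc x y n)

/-- `H = ⟨c_i : i ≥ 1⟩`. -/
def Hsub (x y : G) : Subgroup G :=
  Subgroup.closure {g | ∃ i, 1 ≤ i ∧ g = cc x y i}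

/-- `Z = ⟨c_l², z_{m,n} : l, m, n ≥ 1⟩`. -/
def Zsub (x y : G) : Subgroup G :=
  Subgroup.closure ({g | ∃ l, 1 ≤ l ∧ g = cc x y l ^ 2} ∪
    {g | ∃ m n, 1 ≤ m ∧ 1 ≤ n ∧ g = zz x y m n})

/-- `w_{i,j,k} = ∏_{t=1}^{2^k−1} [z_{i+t,j+t−1}, x, (2^k−1−t)…, x]`,
factors in order of increasing `t` (reindexed by `t ↦ t+1`). -/
def ww (x y : G) (i j k : ℕ) : G :=
  ((List.range (2 ^ k - 1)).map
    (fun t => itc x (zz x y (i + t + 1) (j + t)) (2 ^ k - 2 - t))).prod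

/-- `L_k`, the normal closure of `{w_{i,j,k} : i,j ≥ 1} ∪ {z_{m,n} : m ≥ 2^k, n ≥ 1}`. -/
def Lsub (x y : G) (k : ℕ) : Subgroup G :=
  Subgroup.normalClosure ({g | ∃ i j, 1 ≤ i ∧ 1 ≤ j ∧ g = ww x y i j k} ∪
    {g | ∃ m n, 2 ^ k ≤ m ∧ 1 ≤ n ∧ g = zz x y m n})

/-- `Q_k = ⟨c_l² : l ≥ 2^{k−1}⟩`. -/
def Qsub (x y : G) (k : ℕ) : Subgroup G :=
  Subgroup.closure {g | ∃ l, 2 ^ (k - 1) ≤ l ∧ g = cc x y l ^ 2}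

/-- `d_k(h) = [h,x,(2^k−1)…,x]⁻¹ · x^{−2^k} · (xh)^{2^k}`. -/
def dd (x y : G) (k : ℕ) (h : G) : G :=
  (itc x h (2 ^ k - 1))⁻¹ * (x ^ 2 ^ k)⁻¹ * (x * h) ^ 2 ^ k

/-- `Γ^{2^k} = ⟨g^{2^k} : g ∈ Γ⟩`. -/
def pow2Sub (G : Type*) [Group G] (k : ℕ) : Subgroup G :=
  Subgroup.closure {g | ∃ a : G, g = a ^ 2 ^ k}

/-- `ζ(h₁,h₂) = ∏_{ℓ=0}^{2^k−2} [h₁^x, x, (ℓ)…, x, h₂, x, (2^k−2−ℓ)…, x]`,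
factors in order of increasing `ℓ`. -/
def zeta (x : G) (k : ℕ) (h₁ h₂ : G) : G :=
  ((List.range (2 ^ k - 1)).map
    (fun l => itc x (pc (itc x (x⁻¹ * h₁ * x) l) h₂) (2 ^ k - 2 - l))).prod

-- auxiliary development
lemma pc_one_of_comm {a b : G} (h : a * b = b * a) : pc a b = 1 := by
  have e : pc a b = a⁻¹ * b⁻¹ * (a * b) := by simp [pc, mul_assoc]
  rw [e, h]; group

lemma pc_mul_left {a b c : G} (h : pc a c * b = b * pc a c) :
    pc (a * b) c = pc a c * pc b c := by
  have e1 : pc (a * b) c = b⁻¹ * (pc a c * b) * (b⁻¹ * c⁻¹ * b * c) := by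
    simp only [pc]; group
  rw [e1, h]
  simp only [pc]; group

lemma pc_mul_right {a c d : G} (h : pc a c * d = d * pc a c) :
    pc a (c * d) = pc a d * pc a c := by
  have e1 : pc a (c * d) = pc a d * (d⁻¹ * (pc a c * d)) := by
    simp only [pc]; group
  rw [e1, h]
  simp only [pc]; group

lemma sq_expand {a b : G} (h : pc b a * b = b * pc b a) :
    (a * b) ^ 2 = a ^ 2 * b ^ 2 * pc b a := by
  have e1 : (a * b) ^ 2 = a ^ 2 * b ^ 2 * (b⁻¹ * (pc b a * b)) := by
    simp only [pc, pow_two]; group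
  rw [e1, h]; group

def spow (x : G) (n : ℕ) (g : G) : G := (x ^ n)⁻¹ * g * x ^ n

lemma spow_mul (x : G) (n : ℕ) (a b : G) :
    spow x n (a * b) = spow x n a * spow x n b := by simp [spow]; group

lemma spow_inv (x : G) (n : ℕ) (a : G) : spow x n a⁻¹ = (spow x n a)⁻¹ := by
  simp [spow]; group

lemma spow_one (x : G) (n : ℕ) : spow x n (1 : G) = 1 := by simp [spow]

lemma spow_add (x : G) (m n : ℕ) (g : G) :
    spow x (m + n) g = spow x n (spow x m g) := by
  simp [spow, pow_add]; group

lemma spow_pc (x : G) (n : ℕ) (a b : G) :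
    spow x n (pc a b) = pc (spow x n a) (spow x n b) := by
  simp [spow, pc]; group

def PP (x : G) : ℕ → G → G
  | 0, _ => 1
  | (N + 1), h => spow x N h * PP x N h

lemma PP_add (x : G) (N M : ℕ) (h : G) :
    PP x (N + M) h = spow x M (PP x N h) * PP x M h := by
  induction N with
  | zero => rw [Nat.zero_add]; show PP x M h = spow x M (1 : G) * PP x M h; rw [spow_one, one_mul]
  | succ N ih =>
    have e : N + 1 + M = (N + M) + 1 := by omega
    rw [e]
    show spow x (N + M) h * PP x (N + M) h = spow x M (spow x N h * PP x N h) * PP x M h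
    rw [ih, spow_mul, spow_add, mul_assoc]

lemma PP_eq (x : G) (N : ℕ) (h : G) : PP x N h = (x ^ N)⁻¹ * (x * h) ^ N := by
  induction N with
  | zero => simp [PP]
  | succ N ih =>
    show spow x N h * PP x N h = (x ^ (N + 1))⁻¹ * (x * h) ^ (N + 1)
    rw [ih, pow_succ' (x * h), pow_succ x N]
    simp only [spow]
    generalize (x * h) ^ N = P
    group

lemma cc_mem (x y : G) {i : ℕ} (hi : 1 ≤ i) : cc x y i ∈ Hsub x y :=
  Subgroup.subset_closure ⟨i, hi, rfl⟩

lemma sq_mem (x y : G) {l : ℕ} (hl : 1 ≤ l) : cc x y l ^ 2 ∈ Zsub x y :=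
  Subgroup.subset_closure (Or.inl ⟨l, hl, rfl⟩)

lemma zzZ (x y : G) {m n : ℕ} (hm : 1 ≤ m) (hn : 1 ≤ n) : zz x y m n ∈ Zsub x y :=
  Subgroup.subset_closure (Or.inr ⟨m, n, hm, hn, rfl⟩)

lemma ZleH (x y : G) : Zsub x y ≤ Hsub x y := by
  rw [Zsub, Subgroup.closure_le]
  rintro g (⟨l, hl, rfl⟩ | ⟨m, n, hm, hn, rfl⟩)
  · exact pow_mem (cc_mem x y hl) 2
  · show zz x y m n ∈ Hsub x y
    unfold zz pc
    exact mul_mem (mul_mem (mul_mem (inv_mem (cc_mem x y hm)) (inv_mem (cc_mem x y hn)))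
      (cc_mem x y hm)) (cc_mem x y hn)

lemma cc_succ (x y : G) {i : ℕ} (hi : 1 ≤ i) : cc x y (i + 1) = pc (cc x y i) x := by
  obtain ⟨j, rfl⟩ := Nat.exists_eq_add_of_le hi
  have h1 : 1 + j + 1 - 1 = j + 1 := by omega
  have h2 : 1 + j - 1 = j := by omega
  rw [cc, cc, h1, h2, itc]

lemma sig_cc (x y : G) {i : ℕ} (hi : 1 ≤ i) :
    spow x 1 (cc x y i) = cc x y i * cc x y (i + 1) := by
  rw [cc_succ x y hi]
  simp only [spow, pc, pow_one]
  group

section Main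

variable (x y : G)

lemma coset_mul (hca : ∀ z ∈ Zsub x y, ∀ h ∈ Hsub x y, z * h = h * z)
    {u₁ v₁ ζ₁ u₂ v₂ ζ₂ : G} (h1 : u₁ = v₁ * ζ₁) (h2 : u₂ = v₂ * ζ₂)
    (hζ₁ : ζ₁ ∈ Zsub x y) (hv₂ : v₂ ∈ Hsub x y) :
    u₁ * u₂ = (v₁ * v₂) * (ζ₁ * ζ₂) := by
  rw [h1, h2]
  have hc := hca ζ₁ hζ₁ v₂ hv₂
  calc v₁ * ζ₁ * (v₂ * ζ₂) = v₁ * (ζ₁ * v₂) * ζ₂ := by group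
    _ = v₁ * (v₂ * ζ₁) * ζ₂ := by rw [hc]
    _ = (v₁ * v₂) * (ζ₁ * ζ₂) := by group

lemma sigZ (hca : ∀ z ∈ Zsub x y, ∀ h ∈ Hsub x y, z * h = h * z)
    {z : G} (hz : z ∈ Zsub x y) : spow x 1 z ∈ Zsub x y := by
  refine Subgroup.closure_induction ?_ ?_ ?_ ?_ hz
  · rintro g (⟨l, hl, rfl⟩ | ⟨m, n, hm, hn, rfl⟩)
    · have e0 : spow x 1 (cc x y l ^ 2) = (spow x 1 (cc x y l)) ^ 2 := by
        simp only [spow, pow_two]; group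
      rw [e0, sig_cc x y hl]
      have hpc : pc (cc x y (l + 1)) (cc x y l) ∈ Zsub x y := zzZ x y (by omega) hl
      have hcomm : pc (cc x y (l + 1)) (cc x y l) * cc x y (l + 1)
          = cc x y (l + 1) * pc (cc x y (l + 1)) (cc x y l) :=
        hca _ hpc _ (cc_mem x y (by omega))
      rw [sq_expand hcomm]
      exact mul_mem (mul_mem (sq_mem x y hl) (sq_mem x y (by omega))) hpc
    · rw [zz, spow_pc, sig_cc x y hm, sig_cc x y hn]
      have key : ∀ p, 1 ≤ p → pc (cc x y p) (cc x y n * cc x y (n + 1)) ∈ Zsub x y := by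
        intro p hp
        have hcm : pc (cc x y p) (cc x y n) * cc x y (n + 1)
            = cc x y (n + 1) * pc (cc x y p) (cc x y n) :=
          hca _ (zzZ x y hp hn) _ (cc_mem x y (by omega))
        rw [pc_mul_right hcm]
        exact mul_mem (zzZ x y hp (by omega)) (zzZ x y hp hn)
      have hcm2 : pc (cc x y m) (cc x y n * cc x y (n + 1)) * cc x y (m + 1)
          = cc x y (m + 1) * pc (cc x y m) (cc x y n * cc x y (n + 1)) :=
        hca _ (key m hm) _ (cc_mem x y (by omega))
      rw [pc_mul_left hcm2]
      exact mul_mem (key m hm) (key (m + 1) (by omega))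
  · rw [spow_one]; exact one_mem _
  · intro a b _ _ iha ihb
    rw [spow_mul]; exact mul_mem iha ihb
  · intro a _ iha
    rw [spow_inv]; exact inv_mem iha

lemma spowN_Z (hca : ∀ z ∈ Zsub x y, ∀ h ∈ Hsub x y, z * h = h * z)
    (N : ℕ) {z : G} (hz : z ∈ Zsub x y) : spow x N z ∈ Zsub x y := by
  induction N with
  | zero => simpa [spow] using hz
  | succ N ih =>
    rw [spow_add x N 1 z]
    exact sigZ x y hca ih

lemma L1 (hca : ∀ z ∈ Zsub x y, ∀ h ∈ Hsub x y, z * h = h * z) (k : ℕ) :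
    ∀ i, 1 ≤ i → ∃ ζ ∈ Zsub x y,
      spow x (2 ^ k) (cc x y i) = (cc x y i * cc x y (i + 2 ^ k)) * ζ := by
  induction k with
  | zero =>
    intro i hi
    refine ⟨1, one_mem _, ?_⟩
    rw [mul_one, pow_zero, sig_cc x y hi]
  | succ k ih =>
    intro i hi
    have hN1 : 1 ≤ 2 ^ k := Nat.one_le_two_pow
    obtain ⟨ζ₁, hζ₁, h1⟩ := ih i hi
    obtain ⟨ζ₂, hζ₂, h2⟩ := ih (i + 2 ^ k) (by omega)
    have hNN : 2 ^ (k + 1) = 2 ^ k + 2 ^ k := by rw [pow_succ]; omega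
    set N := 2 ^ k with hNdef
    have e1 : spow x N (cc x y i) * spow x N (cc x y (i + N))
        = ((cc x y i * cc x y (i + N)) * (cc x y (i + N) * cc x y (i + N + N))) * (ζ₁ * ζ₂) :=
      coset_mul x y hca h1 h2 hζ₁ (mul_mem (cc_mem x y (by omega)) (cc_mem x y (by omega)))
    have h3 : spow x N ζ₁ = 1 * spow x N ζ₁ := (one_mul _).symm
    have e2 : (spow x N (cc x y i) * spow x N (cc x y (i + N))) * spow x N ζ₁
        = (((cc x y i * cc x y (i + N)) * (cc x y (i + N) * cc x y (i + N + N))) * 1)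
          * ((ζ₁ * ζ₂) * spow x N ζ₁) :=
      coset_mul x y hca e1 h3 (mul_mem hζ₁ hζ₂) (one_mem _)
    have hsw : cc x y (i + N) ^ 2 * cc x y (i + N + N)
        = cc x y (i + N + N) * cc x y (i + N) ^ 2 :=
      hca _ (sq_mem x y (by omega)) _ (cc_mem x y (by omega))
    refine ⟨cc x y (i + N) ^ 2 * ((ζ₁ * ζ₂) * spow x N ζ₁), ?_, ?_⟩
    · exact mul_mem (sq_mem x y (by omega))
        (mul_mem (mul_mem hζ₁ hζ₂) (spowN_Z x y hca N hζ₁))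
    · calc spow x (2 ^ (k + 1)) (cc x y i)
          = spow x N (spow x N (cc x y i)) := by rw [hNN, spow_add]
        _ = (spow x N (cc x y i) * spow x N (cc x y (i + N))) * spow x N ζ₁ := by
            conv_lhs => rw [h1, spow_mul, spow_mul]
        _ = (((cc x y i * cc x y (i + N)) * (cc x y (i + N) * cc x y (i + N + N))) * 1)
              * ((ζ₁ * ζ₂) * spow x N ζ₁) := e2
        _ = (cc x y i * (cc x y (i + N) ^ 2 * cc x y (i + N + N)))
              * ((ζ₁ * ζ₂) * spow x N ζ₁) := by
            simp only [mul_one, pow_two]; group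
        _ = (cc x y i * (cc x y (i + N + N) * cc x y (i + N) ^ 2))
              * ((ζ₁ * ζ₂) * spow x N ζ₁) := by rw [hsw]
        _ = (cc x y i * cc x y (i + 2 ^ (k + 1)))
              * (cc x y (i + N) ^ 2 * ((ζ₁ * ζ₂) * spow x N ζ₁)) := by
            rw [show i + 2 ^ (k + 1) = i + N + N by omega]
            group

lemma L2 (hca : ∀ z ∈ Zsub x y, ∀ h ∈ Hsub x y, z * h = h * z) (k : ℕ) :
    ∀ i, 1 ≤ i → ∃ ζ ∈ Zsub x y,
      PP x (2 ^ k) (cc x y i) = cc x y (i + 2 ^ k - 1) * ζ := by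
  induction k with
  | zero =>
    intro i hi
    refine ⟨1, one_mem _, ?_⟩
    rw [pow_zero]
    show spow x 0 (cc x y i) * PP x 0 (cc x y i) = cc x y (i + 1 - 1) * 1
    simp [spow, PP]
  | succ k ih =>
    intro i hi
    have hN1 : 1 ≤ 2 ^ k := Nat.one_le_two_pow
    have hNN : 2 ^ (k + 1) = 2 ^ k + 2 ^ k := by rw [pow_succ]; omega
    set N := 2 ^ k with hNdef
    obtain ⟨ζ, hζ, h1⟩ := ih i hi
    obtain ⟨ζ₂, hζ₂, h2⟩ := L1 x y hca k (i + N - 1) (by omega)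
    set a := cc x y (i + N - 1) with hadef
    set b := cc x y (i + N - 1 + N) with hbdef
    have e1 : spow x N a * spow x N ζ = ((a * b) * 1) * (ζ₂ * spow x N ζ) :=
      coset_mul x y hca h2 ((one_mul _).symm) hζ₂ (one_mem _)
    have e2 : (spow x N a * spow x N ζ) * PP x N (cc x y i)
        = (((a * b) * 1) * a) * ((ζ₂ * spow x N ζ) * ζ) :=
      coset_mul x y hca e1 h1 (mul_mem hζ₂ (spowN_Z x y hca N hζ)) (cc_mem x y (by omega))
    have hsw1 : b * a = (a * b) * pc b a := by simp only [pc]; group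
    have hc2 : a ^ 2 * b = b * a ^ 2 :=
      hca _ (sq_mem x y (by omega)) _ (cc_mem x y (by omega))
    have hpcZ : pc b a ∈ Zsub x y := zzZ x y (by omega) (by omega)
    refine ⟨a ^ 2 * (pc b a * ((ζ₂ * spow x N ζ) * ζ)), ?_, ?_⟩
    · exact mul_mem (sq_mem x y (by omega))
        (mul_mem hpcZ (mul_mem (mul_mem hζ₂ (spowN_Z x y hca N hζ)) hζ))
    · calc PP x (2 ^ (k + 1)) (cc x y i)
          = spow x N (PP x N (cc x y i)) * PP x N (cc x y i) := by rw [hNN, PP_add]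
        _ = (spow x N a * spow x N ζ) * PP x N (cc x y i) := by
            rw [h1, spow_mul]
        _ = (((a * b) * 1) * a) * ((ζ₂ * spow x N ζ) * ζ) := e2
        _ = (a * (b * a)) * ((ζ₂ * spow x N ζ) * ζ) := by group
        _ = (a * ((a * b) * pc b a)) * ((ζ₂ * spow x N ζ) * ζ) := by rw [hsw1]
        _ = ((a ^ 2 * b) * pc b a) * ((ζ₂ * spow x N ζ) * ζ) := by
            simp only [pow_two]; group
        _ = ((b * a ^ 2) * pc b a) * ((ζ₂ * spow x N ζ) * ζ) := by rw [hc2]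
        _ = cc x y (i + 2 ^ (k + 1) - 1)
              * (a ^ 2 * (pc b a * ((ζ₂ * spow x N ζ) * ζ))) := by
            rw [show i + 2 ^ (k + 1) - 1 = i + N - 1 + N by omega, ← hbdef]
            group

lemma PP_mem (k : ℕ) (h : G) : PP x (2 ^ k) h ∈ pow2Sub G k := by
  rw [PP_eq]
  exact mul_mem (inv_mem (Subgroup.subset_closure ⟨x, rfl⟩))
    (Subgroup.subset_closure ⟨x * h, rfl⟩)

lemma conj_mem_pow2 (k : ℕ) {g : G} (hg : g ∈ pow2Sub G k) (c : G) :
    c⁻¹ * g * c ∈ pow2Sub G k := by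
  refine Subgroup.closure_induction ?_ ?_ ?_ ?_ hg
  · rintro w ⟨a, rfl⟩
    have h2 : (c⁻¹ * a * c) ^ 2 ^ k = c⁻¹ * a ^ 2 ^ k * c := by
      rw [show c⁻¹ * a * c = c⁻¹ * a * c⁻¹⁻¹ by rw [inv_inv], conj_pow, inv_inv]
    rw [← h2]
    exact Subgroup.subset_closure ⟨c⁻¹ * a * c, rfl⟩
  · have : c⁻¹ * 1 * c = (1 : G) := by group
    rw [this]; exact one_mem _
  · intro u v _ _ ihu ihv
    have : c⁻¹ * (u * v) * c = (c⁻¹ * u * c) * (c⁻¹ * v * c) := by group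
    rw [this]; exact mul_mem ihu ihv
  · intro u _ ihu
    have : c⁻¹ * u⁻¹ * c = (c⁻¹ * u * c)⁻¹ := by group
    rw [this]; exact inv_mem ihu

end Main

theorem zz_mem_powers (x y : G)
    (hca : ∀ z ∈ Zsub x y, ∀ h ∈ Hsub x y, z * h = h * z)
    (hz2 : ∀ z ∈ Zsub x y, z ^ 2 = 1)
    (k : ℕ) (hk : 1 ≤ k) :
    (∀ m n : ℕ, 2 ^ k ≤ m → 1 ≤ n → zz x y m n ∈ pow2Sub G k) ∧
      Subgroup.closure {g | ∃ m n, 2 ^ k ≤ m ∧ 1 ≤ n ∧ g = zz x y m n} ≤ pow2Sub G k := by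
  have main : ∀ m n : ℕ, 2 ^ k ≤ m → 1 ≤ n → zz x y m n ∈ pow2Sub G k := by
    intro m n hm hn
    have hN1 : 1 ≤ 2 ^ k := Nat.one_le_two_pow
    have hm1 : 1 ≤ m := le_trans hN1 hm
    obtain ⟨ζ, hζ, hPP⟩ := L2 x y hca k (m - 2 ^ k + 1) (by omega)
    rw [show m - 2 ^ k + 1 + 2 ^ k - 1 = m by omega] at hPP
    set g := PP x (2 ^ k) (cc x y (m - 2 ^ k + 1)) with hgdef
    have hgmem : g ∈ pow2Sub G k := PP_mem x k _
    have e0 : pc ζ (cc x y n) = 1 := pc_one_of_comm (hca ζ hζ _ (cc_mem x y hn))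
    have hcomm1 : pc (cc x y m) (cc x y n) * ζ = ζ * pc (cc x y m) (cc x y n) :=
      hca _ (zzZ x y hm1 hn) _ (ZleH x y hζ)
    have e : pc g (cc x y n) = pc (cc x y m) (cc x y n) * pc ζ (cc x y n) := by
      rw [hPP]; exact pc_mul_left hcomm1
    rw [e0, mul_one] at e
    have e2 : zz x y m n = g⁻¹ * ((cc x y n)⁻¹ * g * cc x y n) := by
      rw [zz, ← e]
      simp only [pc]; group
    rw [e2]
    exact mul_mem (inv_mem hgmem) (conj_mem_pow2 k hgmem _)
  refine ⟨main, ?_⟩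
  rw [Subgroup.closure_le]
  rintro g ⟨m, n, hm, hn, rfl⟩
  exact main m n hm hn


end Paper
end

section
/- For every k ≥ 1 and every z ∈ Z, the iterated commutator [z, x, (p^k−1)…, x] lies in L_k. (Lemma 5.1(i) of the paper, stated under the relations satisfied by the pro-p group 𝔊(p) for odd p.) -/
namespace Paper

variable {G : Type*} [Group G]

/-- `Z = ⟨z_{m,n} : m, n ≥ 1⟩` (odd-prime case). -/
def ZsubP (x y : G) : Subgroup G :=
  Subgroup.closure {g | ∃ m n, 1 ≤ m ∧ 1 ≤ n ∧ g = zz x y m n}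

/-- `w_{i,j,k} = ∏_{t=1}^{p^k−1} [z_{i+t,j+t−1}, x, (p^k−1−t)…, x]`,
factors in order of increasing `t` (reindexed by `t ↦ t+1`). -/
def wwP (p : ℕ) (x y : G) (i j k : ℕ) : G :=
  ((List.range (p ^ k - 1)).map
    (fun t => itc x (zz x y (i + t + 1) (j + t)) (p ^ k - 2 - t))).prod

/-- `d_k(h) = [h,x,(p^k−1)…,x]⁻¹ · x^{−p^k} · (xh)^{p^k}`. -/
def ddP (p : ℕ) (x y : G) (k : ℕ) (h : G) : G :=
  (itc x h (p ^ k - 1))⁻¹ * (x ^ p ^ k)⁻¹ * (x * h) ^ p ^ k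

/-- `L_k`, the normal closure of `{w_{i,j,k} : i,j ≥ 1} ∪ {d_k(y)} ∪ {z_{m,n} : m ≥ p^k, n ≥ 1}`. -/
def LsubP (p : ℕ) (x y : G) (k : ℕ) : Subgroup G :=
  Subgroup.normalClosure (({g | ∃ i j, 1 ≤ i ∧ 1 ≤ j ∧ g = wwP p x y i j k} ∪
      {ddP p x y k y}) ∪
    {g | ∃ m n, p ^ k ≤ m ∧ 1 ≤ n ∧ g = zz x y m n})

/-- `Γ^{p^k} = ⟨g^{p^k} : g ∈ Γ⟩`. -/
def powSubP (G : Type*) [Group G] (p k : ℕ) : Subgroup G :=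
  Subgroup.closure {g | ∃ a : G, g = a ^ p ^ k}

/-- `Θ̃_k = ⟨z_{m,n} : m ≥ p^k, n ≥ 1⟩`. -/
def ThetaT (p : ℕ) (x y : G) (k : ℕ) : Subgroup G :=
  Subgroup.closure {g | ∃ m n, p ^ k ≤ m ∧ 1 ≤ n ∧ g = zz x y m n}

/-- `[A, g] = ⟨[a,g] : a ∈ A⟩`. -/
def commSub (A : Subgroup G) (g : G) : Subgroup G :=
  Subgroup.closure {c | ∃ a ∈ A, c = pc a g}

/-- The `r`-fold iterate `[A, g, (r)…, g]`. -/
def itcSub (A : Subgroup G) (g : G) : ℕ → Subgroup G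
  | 0 => A
  | r + 1 => commSub (itcSub A g r) g

/-- `Λ̃_k`. -/
def LambdaT (p : ℕ) (x y : G) (k : ℕ) : Subgroup G :=
  Subgroup.closure {g | ∃ m n, g = itc (x ^ p ^ (k - 1)) (zz x y m n) (p - 1) ∧
    ((p ^ (k - 1) ≤ m ∧ m < p ^ k ∧
        max 1 (m - m / p ^ (k - 1) * p ^ (k - 1)) ≤ n ∧ n < p ^ (k - 1)) ∨
      (∃ i, 2 ≤ i ∧ i ≤ p - 2 ∧ m = i * p ^ (k - 1) ∧ n = p ^ (k - 1)))}

/-- `w̃_{i,j,k} = ∏_{t=1}^{p^k−p^{k−1}} [z_{i+t,j+t−1}, x, (p^k−p^{k−1}−t)…, x]`,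
factors in order of increasing `t` (reindexed by `t ↦ t+1`). -/
def wwT (p : ℕ) (x y : G) (i j k : ℕ) : G :=
  ((List.range (p ^ k - p ^ (k - 1))).map
    (fun t => itc x (zz x y (i + t + 1) (j + t)) (p ^ k - p ^ (k - 1) - 1 - t))).prod

/-- `d̃_k(h) = [h,x,(p^k−p^{k−1})…,x]⁻¹ · x^{−p^k} · (x^{p^{k−1}}h)^p`. -/
def ddT (p : ℕ) (x y : G) (k : ℕ) (h : G) : G :=
  (itc x h (p ^ k - p ^ (k - 1)))⁻¹ * (x ^ p ^ k)⁻¹ * (x ^ p ^ (k - 1) * h) ^ p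

/-- `L̃_k`, the normal closure of `{w̃_{i,j,k} : i,j ≥ p^{k−1}} ∪ {d̃_k(y)}`. -/
def LsubT (p : ℕ) (x y : G) (k : ℕ) : Subgroup G :=
  Subgroup.normalClosure
    ({g | ∃ i j, p ^ (k - 1) ≤ i ∧ p ^ (k - 1) ≤ j ∧ g = wwT p x y i j k} ∪
      {ddT p x y k y})

/-- `Γ_{(k)} = ⟨c_j (j ≥ p^{k−1}), z_{m,n} (m > n ≥ 1, m + n ≥ p^{k−1})⟩`. -/
def GammaK (p : ℕ) (x y : G) (k : ℕ) : Subgroup G :=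
  Subgroup.closure ({g | ∃ j, p ^ (k - 1) ≤ j ∧ g = cc x y j} ∪
    {g | ∃ m n, 1 ≤ n ∧ n < m ∧ p ^ (k - 1) ≤ m + n ∧ g = zz x y m n})

/-! ### Auxiliary lemmas -/

lemma pc_one_left (x : G) : pc (1 : G) x = 1 := by simp [pc]

lemma pc_self (a : G) : pc a a = 1 := by simp only [pc]; group

lemma pc_swap (a b : G) : pc a b = (pc b a)⁻¹ := by simp only [pc]; group

lemma itc_one (x : G) : ∀ r, itc x (1 : G) r = 1
  | 0 => rfl
  | r + 1 => by rw [itc, itc_one x r, pc_one_left]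

lemma itc_succ' (x : G) : ∀ (r : ℕ) (a : G), itc x a (r + 1) = itc x (pc a x) r
  | 0, a => rfl
  | r + 1, a => by rw [itc, itc_succ' x r a]; rfl

/-- commutator expansion on the left, pure group identity -/
lemma pc_mul_left_s12 (u v w : G) : pc (u * v) w = v⁻¹ * pc u w * v * pc v w := by simp only [pc]; group

/-- commutator expansion on the right, pure group identity -/
lemma pc_mul_right_s12 (u v w : G) : pc u (v * w) = pc u w * (w⁻¹ * pc u v * w) := by simp only [pc]; group

/-- conjugation formula, pure group identity -/
lemma pc_conj (a b x : G) : pc (pc a b) x = (pc a b)⁻¹ * pc (a * pc a x) (b * pc b x) := by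
  simp only [pc]; group

/-- abstract telescoping auxiliary product -/
def Wfun {A : Type*} [Monoid A] (φ : A →* A) (f : ℕ → ℕ → A) : ℕ → ℕ → ℕ → A
  | 0, _, _ => 1
  | s + 1, i, j => φ^[s] (f (i + 1) j) * Wfun φ f s (i + 1) (j + 1)

lemma Wfun_eq_list {A : Type*} [Monoid A] (φ : A →* A) (f : ℕ → ℕ → A) :
    ∀ s i j, Wfun φ f s i j =
      ((List.range s).map (fun t => φ^[s - 1 - t] (f (i + t + 1) (j + t)))).prod
  | 0, i, j => by simp [Wfun]
  | s + 1, i, j => by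
    rw [Wfun, Wfun_eq_list φ f s (i + 1) (j + 1), List.range_succ_eq_map]
    simp only [List.map_cons, List.prod_cons, List.map_map]
    refine congrArg₂ (· * ·) ?_ (congrArg List.prod ?_)
    · norm_num
    apply List.map_congr_left
    intro t _
    simp only [Function.comp_apply, Nat.succ_eq_add_one]
    have h1 : s + 1 - 1 - (t + 1) = s - 1 - t := by omega
    have h2 : i + (t + 1) + 1 = i + 1 + t + 1 := by omega
    have h3 : j + (t + 1) = j + 1 + t := by omega
    rw [h1, h2, h3]

/-- abstract telescoping identity -/
lemma telescope {A : Type*} [CommMonoid A] (φ : A →* A) (f : ℕ → ℕ → A)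
    (hf : ∀ m n, φ (f m n) = f m (n + 1) * f (m + 1) (n + 1) * f (m + 1) n) :
    ∀ s i j, φ^[s] (f (i + 1) j) =
      Wfun φ f s (i + 1) j * Wfun φ f s i (j + 1) * f (i + s + 1) (j + s)
  | 0, i, j => by simp [Wfun]
  | s + 1, i, j => by
    rw [Function.iterate_succ_apply, hf]
    simp only [iterate_map_mul, Wfun]
    rw [telescope φ f hf s i (j + 1), telescope φ f hf s (i + 1) (j + 1),
      telescope φ f hf s (i + 1) j]
    have e1 : i + 1 + s + 1 = i + s + 2 := by omega
    have e2 : i + 1 + 1 = i + 2 := by omega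
    have e3 : j + 1 + s = j + s + 1 := by omega
    have e4 : j + 1 + 1 = j + 2 := by omega
    have e5 : i + (s + 1) + 1 = i + s + 2 := by omega
    have e6 : j + (s + 1) = j + s + 1 := by omega
    simp only [e1, e2, e3, e4, e5, e6]
    ac_rfl

theorem lemma_Lk_odd_i (p : ℕ) (hp : p.Prime) (hodd : Odd p) (x y : G)
    (hca : ∀ z ∈ ZsubP x y, ∀ h ∈ Hsub x y, z * h = h * z)
    (hHp : ∀ h ∈ Hsub x y, h ^ p = 1)
    (k : ℕ) (hk : 1 ≤ k) (z : G) (hz : z ∈ ZsubP x y) :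
    itc x z (p ^ k - 1) ∈ LsubP p x y k := by
  classical
  set Zs : Subgroup G := ZsubP x y with hZs
  -- membership of generators
  have hcmem : ∀ i : ℕ, cc x y (i + 1) ∈ Hsub x y := fun i =>
    Subgroup.subset_closure ⟨i + 1, by omega, rfl⟩
  have hzmem : ∀ m n : ℕ, zz x y (m + 1) (n + 1) ∈ Zs := fun m n =>
    Subgroup.subset_closure ⟨m + 1, n + 1, by omega, by omega, rfl⟩
  -- Z ≤ H
  have hZH : Zs ≤ Hsub x y := by
    rw [hZs, ZsubP]
    apply (Subgroup.closure_le _).mpr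
    rintro g ⟨m, n, hm, hn, rfl⟩
    have hm' : cc x y m ∈ Hsub x y := Subgroup.subset_closure ⟨m, hm, rfl⟩
    have hn' : cc x y n ∈ Hsub x y := Subgroup.subset_closure ⟨n, hn, rfl⟩
    exact mul_mem (mul_mem (mul_mem (inv_mem hm') (inv_mem hn')) hm') hn'
  -- elements of Z commute with elements of H, and Z is abelian
  have hconj : ∀ z₁ ∈ Zs, ∀ h ∈ Hsub x y, h⁻¹ * z₁ * h = z₁ := by
    intro z₁ hz₁ h hh
    have h2 := hca z₁ hz₁ h hh
    rw [mul_assoc, h2, ← mul_assoc, inv_mul_cancel, one_mul]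
  have hZcomm : ∀ a ∈ Zs, ∀ b ∈ Zs, a * b = b * a := fun a ha b hb =>
    hca a ha b (hZH hb)
  -- `Z` as a commutative group
  letI : CommGroup ↥Zs :=
    { Zs.toGroup with mul_comm := fun a b => Subtype.ext (hZcomm a.1 a.2 b.1 b.2) }
  -- the shifted generators
  set f : ℕ → ℕ → ↥Zs := fun m n => ⟨zz x y (m + 1) (n + 1), hzmem m n⟩ with hf
  -- successor of `cc`
  have hccsucc : ∀ i : ℕ, cc x y (i + 2) = pc (cc x y (i + 1)) x := fun i => rfl
  -- Claim A at the level of `G`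
  have claimA : ∀ m n : ℕ, pc (zz x y (m + 1) (n + 1)) x =
      zz x y (m + 1) (n + 2) * zz x y (m + 2) (n + 2) * zz x y (m + 2) (n + 1) := by
    intro m n
    set a := cc x y (m + 1)
    set b := cc x y (n + 1)
    set a' := cc x y (m + 2)
    set b' := cc x y (n + 2)
    have ha' : a' = pc a x := hccsucc m
    have hb' : b' = pc b x := hccsucc n
    have haH : a ∈ Hsub x y := hcmem m
    have hbH : b ∈ Hsub x y := hcmem n
    have ha'H : a' ∈ Hsub x y := hcmem (m + 1)
    have hb'H : b' ∈ Hsub x y := hcmem (n + 1)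
    have zab : zz x y (m + 1) (n + 1) = pc a b := rfl
    have zab' : zz x y (m + 1) (n + 2) = pc a b' := rfl
    have za'b : zz x y (m + 2) (n + 1) = pc a' b := rfl
    have za'b' : zz x y (m + 2) (n + 2) = pc a' b' := rfl
    have mab : pc a b ∈ Zs := zab ▸ hzmem m n
    have mab' : pc a b' ∈ Zs := zab' ▸ hzmem m (n + 1)
    have ma'b : pc a' b ∈ Zs := za'b ▸ hzmem (m + 1) n
    have ma'b' : pc a' b' ∈ Zs := za'b' ▸ hzmem (m + 1) (n + 1)
    rw [zab, zab', za'b, za'b', pc_conj, ← ha', ← hb']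
    -- expand pc (a*a') (b*b')
    have exp1 : pc (a * a') b' = pc a b' * pc a' b' := by
      rw [pc_mul_left_s12, hconj _ mab' a' ha'H]
    have exp2 : pc (a * a') b = pc a b * pc a' b := by
      rw [pc_mul_left_s12, hconj _ mab a' ha'H]
    have exp3 : pc (a * a') (b * b') = pc a b' * pc a' b' * (pc a b * pc a' b) := by
      rw [pc_mul_right_s12, exp1, exp2, hconj _ (mul_mem mab ma'b) b' hb'H]
    rw [exp3]
    -- now cancel `pc a b` using commutativity inside Z
    have hswap : pc a b' * pc a' b' * (pc a b * pc a' b)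
        = pc a b * (pc a b' * pc a' b' * pc a' b) := by
      rw [← mul_assoc, hZcomm _ (mul_mem mab' ma'b') _ mab, mul_assoc]
    rw [hswap, inv_mul_cancel_left]
  -- the commutator-with-x map sends Z to Z
  have hxZ : ∀ z₁ ∈ Zs, pc z₁ x ∈ Zs := by
    intro z₁ hz₁
    refine Subgroup.closure_induction
      (p := fun g _ => pc g x ∈ Zs) ?_ ?_ ?_ ?_ hz₁
    · rintro g ⟨m, n, hm, hn, rfl⟩
      obtain ⟨m', rfl⟩ : ∃ m', m = m' + 1 := ⟨m - 1, by omega⟩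
      obtain ⟨n', rfl⟩ : ∃ n', n = n' + 1 := ⟨n - 1, by omega⟩
      show pc (zz x y (m' + 1) (n' + 1)) x ∈ Zs
      rw [claimA]
      exact mul_mem (mul_mem (hzmem m' (n' + 1)) (hzmem (m' + 1) (n' + 1)))
        (hzmem (m' + 1) n')
    · show pc (1 : G) x ∈ Zs
      rw [pc_one_left]; exact one_mem _
    · intro u v hu hv hpu hpv
      show pc (u * v) x ∈ Zs
      have h := pc_mul_left_s12 u v x
      rw [h, hconj _ hpu v (hZH hv)]
      exact mul_mem hpu hpv
    · intro u hu hpu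
      show pc u⁻¹ x ∈ Zs
      have : pc u⁻¹ x = u * (pc u x)⁻¹ * u⁻¹ := by simp only [pc]; group
      rw [this]
      have : u * (pc u x)⁻¹ * u⁻¹ = (pc u x)⁻¹ := by
        have h := hconj _ (inv_mem hpu) u⁻¹ (hZH (inv_mem hu))
        simpa using h
      rw [this]; exact inv_mem hpu
  -- the homomorphism law on Z
  have hmulZ : ∀ z₁ ∈ Zs, ∀ z₂ ∈ Zs, pc (z₁ * z₂) x = pc z₁ x * pc z₂ x := by
    intro z₁ hz₁ z₂ hz₂
    rw [pc_mul_left_s12, hconj _ (hxZ z₁ hz₁) z₂ (hZH hz₂)]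
  -- the monoid hom T on Z
  set T : ↥Zs →* ↥Zs := MonoidHom.mk'
    (fun w => ⟨pc w.1 x, hxZ w.1 w.2⟩)
    (fun a b => Subtype.ext (hmulZ a.1 a.2 b.1 b.2)) with hT
  have hTcoe : ∀ (r : ℕ) (w : ↥Zs), ((T^[r] w : ↥Zs) : G) = itc x w.1 r := by
    intro r
    induction r with
    | zero => intro w; rfl
    | succ r ih =>
      intro w
      rw [Function.iterate_succ_apply, ih, itc_succ']
      rfl
  -- claim A for T and f
  have claimA' : ∀ m n : ℕ, T (f m n) = f m (n + 1) * f (m + 1) (n + 1) * f (m + 1) n := by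
    intro m n
    exact Subtype.ext (claimA m n)
  have hpk1 : 1 ≤ p ^ k := Nat.one_le_pow _ _ hp.pos
  -- wwP as a coerced Wfun
  have hWcoe : ∀ i j : ℕ, ((Wfun T f (p ^ k - 1) i j : ↥Zs) : G) = wwP p x y (i + 1) (j + 1) k := by
    intro i j
    rw [Wfun_eq_list]
    have hh := (List.prod_hom ((List.range (p ^ k - 1)).map
        (fun t => T^[(p ^ k - 1) - 1 - t] (f (i + t + 1) (j + t)))) (Zs.subtype)).symm
    simp only [List.map_map, Subgroup.coe_subtype] at hh
    rw [hh, wwP]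
    congr 1
    apply List.map_congr_left
    intro t _
    simp only [Function.comp_apply]
    rw [hTcoe]
    have h3 : (p ^ k - 1) - 1 - t = p ^ k - 2 - t := by
      simp only [Nat.sub_sub]
    rw [h3]
    show itc x (zz x y (i + t + 1 + 1) (j + t + 1)) (p ^ k - 2 - t)
        = itc x (zz x y (i + 1 + t + 1) (j + 1 + t)) (p ^ k - 2 - t)
    have e1 : i + t + 1 + 1 = i + 1 + t + 1 := by omega
    have e2 : j + t + 1 = j + 1 + t := by omega
    rw [e1, e2]
  -- the key membership for generators z_{m,n} with m ≥ 2
  have key : ∀ i j : ℕ, itc x (zz x y (i + 2) (j + 1)) (p ^ k - 1) ∈ LsubP p x y k := by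
    intro i j
    have hmain := telescope T f claimA' (p ^ k - 1) i j
    have hcoe := congrArg (Subtype.val) hmain
    rw [hTcoe] at hcoe
    have hf1 : (f (i + 1) j).1 = zz x y (i + 2) (j + 1) := rfl
    rw [hf1] at hcoe
    rw [hcoe]
    simp only [Subgroup.coe_mul]
    have hW1 : ((Wfun T f (p ^ k - 1) (i + 1) j : ↥Zs) : G) = wwP p x y (i + 2) (j + 1) k := by
      have := hWcoe (i + 1) j
      rwa [show i + 1 + 1 = i + 2 from rfl] at this
    have hW2 : ((Wfun T f (p ^ k - 1) i (j + 1) : ↥Zs) : G) = wwP p x y (i + 1) (j + 2) k := by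
      have := hWcoe i (j + 1)
      rwa [show j + 1 + 1 = j + 2 from rfl] at this
    rw [hW1, hW2]
    have hgen1 : wwP p x y (i + 2) (j + 1) k ∈ LsubP p x y k :=
      Subgroup.subset_normalClosure (Or.inl (Or.inl ⟨i + 2, j + 1, by omega, by omega, rfl⟩))
    have hgen2 : wwP p x y (i + 1) (j + 2) k ∈ LsubP p x y k :=
      Subgroup.subset_normalClosure (Or.inl (Or.inl ⟨i + 1, j + 2, by omega, by omega, rfl⟩))
    have hgen3 : (f (i + (p ^ k - 1) + 1) (j + (p ^ k - 1))).1 ∈ LsubP p x y k := by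
      have : (f (i + (p ^ k - 1) + 1) (j + (p ^ k - 1))).1 = zz x y (i + (p ^ k - 1) + 2) (j + (p ^ k - 1) + 1) := rfl
      rw [this]
      exact Subgroup.subset_normalClosure
        (Or.inr ⟨i + (p ^ k - 1) + 2, j + (p ^ k - 1) + 1, by omega, by omega, rfl⟩)
    exact mul_mem (mul_mem hgen1 hgen2) hgen3
  -- now the closure induction over z ∈ Z
  refine Subgroup.closure_induction
    (p := fun g _ => itc x g (p ^ k - 1) ∈ LsubP p x y k) ?_ ?_ ?_ ?_ hz
  · rintro g ⟨m, n, hm, hn, rfl⟩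
    obtain ⟨m', rfl⟩ : ∃ m', m = m' + 1 := ⟨m - 1, by omega⟩
    obtain ⟨n', rfl⟩ : ∃ n', n = n' + 1 := ⟨n - 1, by omega⟩
    show itc x (zz x y (m' + 1) (n' + 1)) (p ^ k - 1) ∈ LsubP p x y k
    rcases Nat.eq_zero_or_pos m' with hm0 | hm1
    · subst hm0
      rcases Nat.eq_zero_or_pos n' with hn0 | hn1
      · subst hn0
        have : zz x y 1 1 = 1 := pc_self _
        rw [this, itc_one]
        exact one_mem _
      · -- m = 1, n ≥ 2 : use antisymmetry
        obtain ⟨n'', rfl⟩ : ∃ n'', n' = n'' + 1 := ⟨n' - 1, by omega⟩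
        have hflip : zz x y 1 (n'' + 2) = (zz x y (n'' + 2) 1)⁻¹ := pc_swap _ _
        have hmem : zz x y (n'' + 2) 1 ∈ Zs := hzmem (n'' + 1) 0
        have : itc x (zz x y 1 (n'' + 2)) (p ^ k - 1)
            = (itc x (zz x y (n'' + 2) 1) (p ^ k - 1))⁻¹ := by
          rw [hflip, ← hTcoe (p ^ k - 1) ⟨zz x y (n'' + 2) 1, hmem⟩,
            ← hTcoe (p ^ k - 1) ⟨(zz x y (n'' + 2) 1)⁻¹, inv_mem hmem⟩]
          have : (⟨(zz x y (n'' + 2) 1)⁻¹, inv_mem hmem⟩ : ↥Zs)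
              = (⟨zz x y (n'' + 2) 1, hmem⟩ : ↥Zs)⁻¹ := rfl
          rw [this, iterate_map_inv]
          rfl
        rw [this]
        exact inv_mem (key n'' 0)
    · obtain ⟨m'', rfl⟩ : ∃ m'', m' = m'' + 1 := ⟨m' - 1, by omega⟩
      exact key m'' n'
  · show itc x (1 : G) (p ^ k - 1) ∈ LsubP p x y k
    rw [itc_one]; exact one_mem _
  · intro u v hu hv hpu hpv
    show itc x (u * v) (p ^ k - 1) ∈ LsubP p x y k
    have : itc x (u * v) (p ^ k - 1) = itc x u (p ^ k - 1) * itc x v (p ^ k - 1) := by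
      rw [← hTcoe _ ⟨u, hu⟩, ← hTcoe _ ⟨v, hv⟩, ← hTcoe _ ⟨u * v, mul_mem hu hv⟩]
      have : (⟨u * v, mul_mem hu hv⟩ : ↥Zs) = ⟨u, hu⟩ * ⟨v, hv⟩ := rfl
      rw [this, iterate_map_mul]
      rfl
    rw [this]; exact mul_mem hpu hpv
  · intro u hu hpu
    show itc x u⁻¹ (p ^ k - 1) ∈ LsubP p x y k
    have : itc x u⁻¹ (p ^ k - 1) = (itc x u (p ^ k - 1))⁻¹ := by
      rw [← hTcoe _ ⟨u, hu⟩, ← hTcoe _ ⟨u⁻¹, inv_mem hu⟩]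
      have : (⟨u⁻¹, inv_mem hu⟩ : ↥Zs) = (⟨u, hu⟩ : ↥Zs)⁻¹ := rfl
      rw [this, iterate_map_inv]
      rfl
    rw [this]; exact inv_mem hpu

end Paper
end
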